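/- Define, for (t,x) ∈ [0,1]×ℝ: V₁(t,x) = e^{3−3t}(1+x²)^{-1}, k₁⁺(t,x) = e^{3−3t}(3x⁴+5)(1+x²)^{-3}, k₁⁻ = 0, with obstacles V̲₁(t,x) = e^{3−3t}(1+x²)^{-1}, V̄₁(t,x) = e⁴(1+x²)^{-1}; and V₂(t,x) = e^{3t−3}(1+x²)^{-1}, k₂⁺ = 0, k₂⁻(t,x) = e^{3t−3}(3x⁴+12x²+1)(1+x²)^{-3}, with obstacles V̲₂ = 0, V̄₂(t,x) = e^{3t−3}(1+x²)^{-1}. Then for all (t,x) ∈ [0,1]×ℝ: ∂_t V₁(t,x) + ∂²_{xx} V₁(t,x) + k₁⁺(t,x) = 0 and ∂_t V₂(t,x) + ∂²_{xx} V₂(t,x) − k₂⁻(t,x) = 0; V̲₁ ≤ V₁ ≤ V̄₁ and V̲₂ ≤ V₂ ≤ V̄₂; k₁⁺ ≥ 0 and k₂⁻ ≥ 0; the complementarity conditions (V₁ − V̲₁)k₁⁺ = 0, (V̄₁ − V₁)k₁⁻ = 0, (V₂ − V̲₂)k₂⁺ = 0, (V̄₂ − V₂)k₂⁻ = 0 hold.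 Moreover, although the data are ordered (both free terms are 0, V₁(1,·) ≥ V₂(1,·), V̲₁ ≥ V̲₂ and V̄₁ ≥ V̄₂ pointwise), the reflection parts are strictly oppositely ordered: k₁⁺(t,x) > k₂⁺(t,x) and k₁⁻(t,x) < k₂⁻(t,x) for all (t,x) ∈ [0,1]×ℝ. -/

import Mathlib

/-- Example (ii) of Remark 5.1: the first solution. -/
noncomputable def W₁ (t x : ℝ) : ℝ := Real.exp (3 - 3 * t) * (1 + x ^ 2)⁻¹

/-- The first lower reflection part. -/
noncomputable def K₁p (t x : ℝ) : ℝ :=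
  Real.exp (3 - 3 * t) * (3 * x ^ 4 + 5) * ((1 + x ^ 2) ^ 3)⁻¹

/-- The first upper reflection part. -/
noncomputable def K₁m (_t _x : ℝ) : ℝ := 0

/-- The first lower obstacle. -/
noncomputable def Low₁ (t x : ℝ) : ℝ := Real.exp (3 - 3 * t) * (1 + x ^ 2)⁻¹

/-- The first upper obstacle. -/
noncomputable def Up₁ (_t x : ℝ) : ℝ := Real.exp 4 * (1 + x ^ 2)⁻¹

/-- The second solution. -/
noncomputable def W₂ (t x : ℝ) : ℝ := Real.exp (3 * t - 3) * (1 + x ^ 2)⁻¹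

/-- The second lower reflection part. -/
noncomputable def K₂p (_t _x : ℝ) : ℝ := 0

/-- The second upper reflection part. -/
noncomputable def K₂m (t x : ℝ) : ℝ :=
  Real.exp (3 * t - 3) * (3 * x ^ 4 + 12 * x ^ 2 + 1) * ((1 + x ^ 2) ^ 3)⁻¹

/-- The second lower obstacle. -/
noncomputable def Low₂ (_t _x : ℝ) : ℝ := 0

/-- The second upper obstacle. -/
noncomputable def Up₂ (t x : ℝ) : ℝ := Real.exp (3 * t - 3) * (1 + x ^ 2)⁻¹

lemma hpos (x : ℝ) : (0:ℝ) < 1 + x ^ 2 := by positivity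

lemma gdiff (x : ℝ) : DifferentiableAt ℝ (fun y : ℝ => (1 + y ^ 2)⁻¹) x := by
  have h : HasDerivAt (fun y : ℝ => 1 + y ^ 2) (2 * x) x := by
    simpa using (hasDerivAt_pow 2 x).const_add 1
  exact (h.inv (hpos x).ne').differentiableAt

lemma gderiv : (deriv fun y : ℝ => (1 + y ^ 2)⁻¹) = fun x => -(2 * x) / (1 + x ^ 2) ^ 2 := by
  funext x
  have h : HasDerivAt (fun y : ℝ => 1 + y ^ 2) (2 * x) x := by
    simpa using (hasDerivAt_pow 2 x).const_add 1
  exact (h.inv (hpos x).ne').deriv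

lemma gHasDeriv2 (x : ℝ) :
    HasDerivAt (fun y : ℝ => -(2 * y) / (1 + y ^ 2) ^ 2)
      ((6 * x ^ 2 - 2) / (1 + x ^ 2) ^ 3) x := by
  have hnum : HasDerivAt (fun y : ℝ => -(2 * y)) (-2) x := by
    simpa using ((hasDerivAt_id x).const_mul (2:ℝ)).fun_neg
  have hden : HasDerivAt (fun y : ℝ => (1 + y ^ 2) ^ 2) (2 * x * (2 * (1 + x ^ 2))) x := by
    have h : HasDerivAt (fun y : ℝ => 1 + y ^ 2) (2 * x) x := by
      simpa using (hasDerivAt_pow 2 x).const_add 1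
    simpa [mul_comm, mul_assoc, mul_left_comm] using (h.fun_pow 2)
  have h := hnum.fun_div hden (by positivity)
  have h0 : (1 + x ^ 2) ≠ 0 := (hpos x).ne'
  refine h.congr_deriv ?_
  rw [div_eq_div_iff (by positivity) (by positivity)]
  ring

lemma secderiv (c x : ℝ) :
    deriv (deriv fun y : ℝ => c * (1 + y ^ 2)⁻¹) x = c * ((6 * x ^ 2 - 2) / (1 + x ^ 2) ^ 3) := by
  have h1 : (deriv fun y : ℝ => c * (1 + y ^ 2)⁻¹)
      = fun y => c * (-(2 * y) / (1 + y ^ 2) ^ 2) := by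
    funext y
    rw [deriv_const_mul c (gdiff y)]
    rw [show (deriv fun z : ℝ => (1 + z ^ 2)⁻¹) y = -(2 * y) / (1 + y ^ 2) ^ 2 from
      congrFun gderiv y]
  rw [h1]
  exact (((gHasDeriv2 x).const_mul c)).deriv

lemma tderiv1 (t c : ℝ) :
    deriv (fun s : ℝ => Real.exp (3 - 3 * s) * c) t = -3 * Real.exp (3 - 3 * t) * c := by
  have h : HasDerivAt (fun s : ℝ => 3 - 3 * s) (-3) t := by
    simpa using (((hasDerivAt_id t).const_mul (3:ℝ)).const_sub 3)
  have := (h.exp.mul_const c).deriv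
  rw [this]; ring

lemma tderiv2 (t c : ℝ) :
    deriv (fun s : ℝ => Real.exp (3 * s - 3) * c) t = 3 * Real.exp (3 * t - 3) * c := by
  have h : HasDerivAt (fun s : ℝ => 3 * s - 3) (3) t := by
    simpa using (((hasDerivAt_id t).const_mul (3:ℝ)).sub_const 3)
  have := (h.exp.mul_const c).deriv
  rw [this]; ring

theorem stmt_18 : ∀ t ∈ Set.Icc (0 : ℝ) 1, ∀ x : ℝ,
    deriv (fun s => W₁ s x) t + deriv (deriv (fun y => W₁ t y)) x + K₁p t x = 0 ∧
    deriv (fun s => W₂ s x) t + deriv (deriv (fun y => W₂ t y)) x - K₂m t x = 0 ∧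
    Low₁ t x ≤ W₁ t x ∧ W₁ t x ≤ Up₁ t x ∧
    Low₂ t x ≤ W₂ t x ∧ W₂ t x ≤ Up₂ t x ∧
    0 ≤ K₁p t x ∧ 0 ≤ K₂m t x ∧
    (W₁ t x - Low₁ t x) * K₁p t x = 0 ∧ (Up₁ t x - W₁ t x) * K₁m t x = 0 ∧
    (W₂ t x - Low₂ t x) * K₂p t x = 0 ∧ (Up₂ t x - W₂ t x) * K₂m t x = 0 ∧
    W₁ 1 x ≥ W₂ 1 x ∧ Low₁ t x ≥ Low₂ t x ∧ Up₁ t x ≥ Up₂ t x ∧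
    K₁p t x > K₂p t x ∧ K₁m t x < K₂m t x := by
  intro t ht x
  obtain ⟨ht0, ht1⟩ := ht
  have h0 : (1 + x ^ 2) ≠ 0 := (hpos x).ne'
  have hg : (0:ℝ) < (1 + x ^ 2)⁻¹ := inv_pos.mpr (hpos x)
  have he1 : (0:ℝ) < Real.exp (3 - 3 * t) := Real.exp_pos _
  have he2 : (0:ℝ) < Real.exp (3 * t - 3) := Real.exp_pos _
  refine ⟨?_, ?_, le_refl _, ?_, ?_, le_refl _, ?_, ?_, ?_, ?_, ?_, ?_, ?_, ?_, ?_, ?_, ?_⟩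
  · show deriv (fun s => Real.exp (3 - 3 * s) * (1 + x ^ 2)⁻¹) t
        + deriv (deriv fun y => Real.exp (3 - 3 * t) * (1 + y ^ 2)⁻¹) x + K₁p t x = 0
    rw [tderiv1, secderiv]
    unfold K₁p
    field_simp
    ring
  · show deriv (fun s => Real.exp (3 * s - 3) * (1 + x ^ 2)⁻¹) t
        + deriv (deriv fun y => Real.exp (3 * t - 3) * (1 + y ^ 2)⁻¹) x - K₂m t x = 0
    rw [tderiv2, secderiv]
    unfold K₂m
    field_simp
    ring
  · unfold W₁ Up₁
    have : Real.exp (3 - 3 * t) ≤ Real.exp 4 := Real.exp_le_exp.mpr (by linarith)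
    exact mul_le_mul_of_nonneg_right this hg.le
  · unfold Low₂ W₂; positivity
  · unfold K₁p; positivity
  · unfold K₂m; positivity
  · unfold W₁ Low₁; ring
  · unfold K₁m; ring
  · unfold K₂p; ring
  · unfold Up₂ W₂; ring
  · unfold W₁ W₂; norm_num
  · unfold Low₁ Low₂; positivity
  · unfold Up₁ Up₂
    have : Real.exp (3 * t - 3) ≤ Real.exp 4 := Real.exp_le_exp.mpr (by linarith)
    exact mul_le_mul_of_nonneg_right this hg.le
  · unfold K₁p K₂p; positivity
  · unfold K₁m K₂m; positivity
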